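/- Let g(u) = e^u + e^{−u} − 2 − u². Then for all u, u' ∈ ℝ: g(u) − g(u') − g'(u')(u − u') ≥ (1/36)(u − u')⁴. -/

import Mathlib

private lemma stmt15_cosh_bd (x : ℝ) :
    0 ≤ Real.exp x + Real.exp (-x) - 2 - x ^ 2 := by
  have hsq : (x / 2) ^ 2 ≤ Real.sinh (x / 2) ^ 2 := by
    rcases le_total 0 x with hx | hx
    · have h0 : x / 2 ≤ Real.sinh (x / 2) := Real.self_le_sinh_iff.mpr (by linarith)
      nlinarith
    · have h0 : -(x / 2) ≤ Real.sinh (-(x / 2)) := Real.self_le_sinh_iff.mpr (by linarith)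
      rw [Real.sinh_neg] at h0
      nlinarith
  have h1 : Real.exp (x / 2) * Real.exp (x / 2) = Real.exp x := by
    rw [← Real.exp_add]; ring_nf
  have h2 : Real.exp (-(x / 2)) * Real.exp (-(x / 2)) = Real.exp (-x) := by
    rw [← Real.exp_add]; ring_nf
  have h3 : Real.exp (x / 2) * Real.exp (-(x / 2)) = 1 := by
    rw [← Real.exp_add]; simp
  have hs : Real.sinh (x / 2) ^ 2 = (Real.exp x + Real.exp (-x) - 2) / 4 := by
    rw [Real.sinh_eq]
    linear_combination h1 / 4 + h2 / 4 - h3 / 2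
  rw [hs] at hsq
  nlinarith [hsq]

private lemma stmt15_hasDeriv_g (u : ℝ) :
    HasDerivAt (fun u : ℝ => Real.exp u + Real.exp (-u) - 2 - u ^ 2)
      (Real.exp u - Real.exp (-u) - 2 * u) u := by
  have h1 := Real.hasDerivAt_exp u
  have h2 : HasDerivAt (fun u : ℝ => Real.exp (-u)) (-Real.exp (-u)) u := by
    simpa using (hasDerivAt_neg u).exp
  have h3 : HasDerivAt (fun u : ℝ => u ^ 2) (2 * u) u := by
    simpa using hasDerivAt_pow 2 u
  have := ((h1.add h2).sub_const 2).sub h3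
  exact this.congr_deriv (by ring)

private lemma stmt15_hasDeriv_phi (u : ℝ) :
    HasDerivAt (fun u : ℝ => Real.exp u + Real.exp (-u) - 2 - u ^ 2 - u ^ 4 / 12)
      (Real.exp u - Real.exp (-u) - 2 * u - u ^ 3 / 3) u := by
  have h4' : HasDerivAt (fun u : ℝ => u ^ 4) ((4 : ℝ) * u ^ 3) u := by
    simpa using hasDerivAt_pow 4 u
  have h4 := h4'.div_const 12
  have := (stmt15_hasDeriv_g u).sub h4
  exact this.congr_deriv (by ring)

private lemma stmt15_hasDeriv_p (u : ℝ) :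
    HasDerivAt (fun u : ℝ => Real.exp u - Real.exp (-u) - 2 * u - u ^ 3 / 3)
      (Real.exp u + Real.exp (-u) - 2 - u ^ 2) u := by
  have h1 := Real.hasDerivAt_exp u
  have h2 : HasDerivAt (fun u : ℝ => Real.exp (-u)) (-Real.exp (-u)) u := by
    simpa using (hasDerivAt_neg u).exp
  have h3 : HasDerivAt (fun u : ℝ => 2 * u) 2 u := by
    simpa using (hasDerivAt_id u).const_mul 2
  have h3' : HasDerivAt (fun u : ℝ => u ^ 3) ((3 : ℝ) * u ^ 2) u := by
    simpa using hasDerivAt_pow 3 u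
  have h4 := h3'.div_const 3
  have := ((h1.sub h2).sub h3).sub h4
  exact this.congr_deriv (by ring)

private lemma stmt15_p_mono :
    Monotone (fun u : ℝ => Real.exp u - Real.exp (-u) - 2 * u - u ^ 3 / 3) := by
  apply monotone_of_deriv_nonneg
  · exact fun x => (stmt15_hasDeriv_p x).differentiableAt
  · intro x
    rw [(stmt15_hasDeriv_p x).deriv]
    exact stmt15_cosh_bd x

/-- For `g(u) = e^u + e^{−u} − 2 − u²`:
`g(u) − g(u') − g'(u')(u − u') ≥ (1/36)(u − u')⁴` for all `u, u'`. -/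
theorem stmt15 (g : ℝ → ℝ)
    (hg : g = fun u : ℝ => Real.exp u + Real.exp (-u) - 2 - u ^ 2) :
    ∀ u u' : ℝ,
      (1 / 36) * (u - u') ^ 4 ≤ g u - g u' - deriv g u' * (u - u') := by
  subst hg
  intro u u'
  set φ : ℝ → ℝ := fun u : ℝ => Real.exp u + Real.exp (-u) - 2 - u ^ 2 - u ^ 4 / 12
    with hφ
  set p : ℝ → ℝ := fun u : ℝ => Real.exp u - Real.exp (-u) - 2 * u - u ^ 3 / 3 with hp
  have hφd : Differentiable ℝ φ := fun x => (stmt15_hasDeriv_phi x).differentiableAt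
  have hφ' : ∀ x, deriv φ x = p x := fun x => (stmt15_hasDeriv_phi x).deriv
  have hdg : deriv (fun u : ℝ => Real.exp u + Real.exp (-u) - 2 - u ^ 2) u'
      = Real.exp u' - Real.exp (-u') - 2 * u' := (stmt15_hasDeriv_g u').deriv
  have tangent : 0 ≤ φ u - φ u' - p u' * (u - u') := by
    rcases le_total u' u with h | h
    · have := Convex.mul_sub_le_image_sub_of_le_deriv (convex_Ici u')
        hφd.continuous.continuousOn hφd.differentiableOn
        (fun x hx => by
          rw [hφ' x]
          exact stmt15_p_mono (le_of_lt (by simpa [interior_Ici] using hx)))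
        u' Set.self_mem_Ici u h h
      rw [← hp] at this
      linarith
    · have := Convex.image_sub_le_mul_sub_of_deriv_le (convex_Iic u')
        hφd.continuous.continuousOn hφd.differentiableOn
        (fun x hx => by
          rw [hφ' x]
          exact stmt15_p_mono (le_of_lt (by simpa [interior_Iic] using hx)))
        u h u' Set.self_mem_Iic h
      rw [← hp] at this
      linarith
  rw [hdg]
  simp only [hφ, hp] at tangent
  nlinarith [tangent, sq_nonneg ((u - u') * (u + 2 * u'))]
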